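/- (Proposition 3.2 of the paper, restated with explicit hypotheses on V and ν.) Fix d ≥ 1 and λ > 0. Let V : ℝ → [0,∞) be nondecreasing with V(s) = 0 for s ≤ 0, V(s) > 0 for s > 0, subadditive (V(s+t) ≤ V(s) + V(t) for all s,t), and satisfy the lower scaling condition: there are δ > 0 and C_V ≥ 1 such that V(R)/V(r) ≥ C_V^{-1}(R/r)^{δ} for all 0 < r ≤ R. Let ν : (0,∞) → [0,∞) be measurable with ν(s) ≤ C₀ s^{-d} V(s)^{-2} for all s > 0. Then there is a constant C > 0, depending only on d, λ, δ, C_V, C₀, such that for every r > 0 and every x = (x̃, x_d) ∈ ℝ^d with 0 < x_d ≤ λ r, ∫_{{y ∈ ℝ^d : |x − y| ≥ r}} V((y_d)⁺) ν(|x − y|) dy ≤ C / V(r), where (y_d)⁺ := max(y_d, 0) and y_d denotes the last coordinate of y. -/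

import Mathlib

open MeasureTheory Set
open scoped ENNReal NNReal

private lemma aux_coord {d : ℕ} (z : EuclideanSpace ℝ (Fin d)) (i : Fin d) : |z i| ≤ ‖z‖ := by
  rw [EuclideanSpace.norm_eq]
  have h1 : |z i| = Real.sqrt (‖z i‖ ^ 2) := by
    rw [Real.sqrt_sq_eq_abs, Real.norm_eq_abs, abs_abs]
  rw [h1]
  exact Real.sqrt_le_sqrt
    (Finset.single_le_sum (fun j _ => sq_nonneg ‖z j‖) (Finset.mem_univ i))

private lemma aux_Vmul (V : ℝ → ℝ) (h0 : V 0 = 0)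
    (hsub : ∀ s t : ℝ, V (s + t) ≤ V s + V t) :
    ∀ (n : ℕ) (s : ℝ), V (n * s) ≤ n * V s := by
  intro n
  induction n with
  | zero => intro s; simp [h0]
  | succ n ih =>
    intro s
    have : ((n : ℝ) + 1) * s = n * s + s := by ring
    push_cast
    rw [this]
    calc V (n * s + s) ≤ V (n * s) + V s := hsub _ _
    _ ≤ n * V s + V s := by linarith [ih s]
    _ = ((n : ℝ) + 1) * V s := by ring

set_option maxHeartbeats 1000000 in
/-- Proposition 3.2: For `V` nondecreasing, subadditive, vanishing on
`(-∞,0]`, positive on `(0,∞)`, with a lower scaling condition, and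
`ν(s) ≤ C₀ s^{-d} V(s)^{-2}`, there is `C > 0` depending only on `d, λ, δ, C_V, C₀`
such that for every `r > 0` and `x` with `0 < x_d ≤ λ r`,
`∫_{|x-y| ≥ r} V((y_d)⁺) ν(|x-y|) dy ≤ C / V(r)`. -/
theorem stmt_8 (d : ℕ) (hd : 1 ≤ d) (lam δ CV C₀ : ℝ)
    (hlam : 0 < lam) (hδ : 0 < δ) (hCV : 1 ≤ CV) (hC₀ : 0 < C₀) :
    ∃ C : ℝ, 0 < C ∧
      ∀ V ν : ℝ → ℝ,
        (∀ s : ℝ, s ≤ 0 → V s = 0) →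
        (∀ s : ℝ, 0 < s → 0 < V s) →
        (∀ s t : ℝ, s ≤ t → V s ≤ V t) →
        (∀ s t : ℝ, V (s + t) ≤ V s + V t) →
        (∀ r R : ℝ, 0 < r → r ≤ R → CV⁻¹ * (R / r) ^ δ ≤ V R / V r) →
        Measurable ν →
        (∀ s : ℝ, 0 < s → 0 ≤ ν s) →
        (∀ s : ℝ, 0 < s → ν s ≤ C₀ / (s ^ d * V s ^ 2)) →
        ∀ r : ℝ, 0 < r →
          ∀ x : EuclideanSpace ℝ (Fin d),
            0 < x ⟨d - 1, by omega⟩ → x ⟨d - 1, by omega⟩ ≤ lam * r →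
            ∫⁻ y : EuclideanSpace ℝ (Fin d) in {y | r ≤ ‖x - y‖},
                ENNReal.ofReal (V (max (y ⟨d - 1, by omega⟩) 0) * ν ‖x - y‖)
              ≤ ENNReal.ofReal (C / V r) := by
  classical
  set ρ : ℝ := (d : ℝ) + δ with hρdef
  have hρpos : 0 < ρ := by positivity
  have hdρ : (d : ℝ) < ρ := by simp [hρdef]; linarith
  -- the dilation-invariant reference integral
  set g : EuclideanSpace ℝ (Fin d) → ℝ≥0∞ :=
    fun w => ({w : EuclideanSpace ℝ (Fin d) | 1 ≤ ‖w‖}).indicator (fun w => ENNReal.ofReal (‖w‖ ^ (-ρ))) w with hgdef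
  set K : ℝ≥0∞ := ∫⁻ w : EuclideanSpace ℝ (Fin d), g w with hKdef
  have hmeas_set : ∀ c : ℝ, MeasurableSet {z : EuclideanSpace ℝ (Fin d) | c ≤ ‖z‖} :=
    fun c => (isClosed_le continuous_const continuous_norm).measurableSet
  have hmeas_f : Measurable fun z : EuclideanSpace ℝ (Fin d) => ENNReal.ofReal (‖z‖ ^ (-ρ)) :=
    (measurable_norm.pow_const _).ennreal_ofReal
  have hmeas_g : Measurable g := hmeas_f.indicator (hmeas_set 1)
  -- finiteness of K
  have hKfin : K < ⊤ := by
    have hbound : ∀ w : EuclideanSpace ℝ (Fin d),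
        g w ≤ ENNReal.ofReal ((2 : ℝ) ^ ρ) * ENNReal.ofReal ((1 + ‖w‖) ^ (-ρ)) := by
      intro w
      by_cases h : 1 ≤ ‖w‖
      · have hw0 : (0 : ℝ) < ‖w‖ := lt_of_lt_of_le one_pos h
        have h1 : (1 : ℝ) + ‖w‖ ≤ 2 * ‖w‖ := by linarith
        have h2 : (2 * ‖w‖ : ℝ) ^ (-ρ) ≤ (1 + ‖w‖) ^ (-ρ) :=
          Real.rpow_le_rpow_of_nonpos (by linarith) h1 (by linarith)
        have h3 : (2 * ‖w‖ : ℝ) ^ (-ρ) = (2:ℝ) ^ (-ρ) * ‖w‖ ^ (-ρ) :=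
          Real.mul_rpow (by norm_num) hw0.le
        have h4 : ‖w‖ ^ (-ρ) ≤ (2:ℝ) ^ ρ * (1 + ‖w‖) ^ (-ρ) := by
          have h5 : (2:ℝ) ^ ρ * ((2:ℝ) ^ (-ρ) * ‖w‖ ^ (-ρ)) = ‖w‖ ^ (-ρ) := by
            rw [← mul_assoc, ← Real.rpow_add (by norm_num)]
            simp
          calc ‖w‖ ^ (-ρ) = (2:ℝ) ^ ρ * ((2 * ‖w‖ : ℝ) ^ (-ρ)) := by rw [h3, h5]
          _ ≤ (2:ℝ) ^ ρ * ((1 + ‖w‖) ^ (-ρ)) := by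
              apply mul_le_mul_of_nonneg_left h2 (Real.rpow_nonneg (by norm_num) _)
        have : g w = ENNReal.ofReal (‖w‖ ^ (-ρ)) := by
          simp [hgdef, Set.indicator_of_mem, h]
        rw [this, ← ENNReal.ofReal_mul (Real.rpow_nonneg (by norm_num) _)]
        exact ENNReal.ofReal_le_ofReal h4
      · have : g w = 0 := by simp [hgdef, Set.indicator_of_notMem, h]
        rw [this]; exact zero_le
    calc K ≤ ∫⁻ w : EuclideanSpace ℝ (Fin d), ENNReal.ofReal ((2 : ℝ) ^ ρ) * ENNReal.ofReal ((1 + ‖w‖) ^ (-ρ)) :=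
          lintegral_mono hbound
    _ = ENNReal.ofReal ((2 : ℝ) ^ ρ) * ∫⁻ w : EuclideanSpace ℝ (Fin d), ENNReal.ofReal ((1 + ‖w‖) ^ (-ρ)) :=
          lintegral_const_mul' _ _ ENNReal.ofReal_ne_top
    _ < ⊤ := by
        apply ENNReal.mul_lt_top ENNReal.ofReal_lt_top
        have := finite_integral_one_add_norm (E := EuclideanSpace ℝ (Fin d)) (μ := volume) (r := ρ)
          (by rw [finrank_euclideanSpace_fin]; exact hdρ)
        exact this
  -- scaling identity
  have hscale : ∀ c : ℝ, 0 < c →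
      (∫⁻ z : EuclideanSpace ℝ (Fin d) in {z : EuclideanSpace ℝ (Fin d) | c ≤ ‖z‖}, ENNReal.ofReal (‖z‖ ^ (-ρ)))
        = ENNReal.ofReal (c ^ (-δ)) * K := by
    intro c hc
    have hcne : c ≠ 0 := ne_of_gt hc
    set F : EuclideanSpace ℝ (Fin d) → ℝ≥0∞ :=
      fun z => ({z : EuclideanSpace ℝ (Fin d) | c ≤ ‖z‖}).indicator (fun z => ENNReal.ofReal (‖z‖ ^ (-ρ))) z with hFdef
    have hFmeas : Measurable F := hmeas_f.indicator (hmeas_set c)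
    have hcomp : ∀ w : EuclideanSpace ℝ (Fin d), F (c • w) = ENNReal.ofReal (c ^ (-ρ)) * g w := by
      intro w
      have hnorm : ‖c • w‖ = c * ‖w‖ := by
        rw [norm_smul, Real.norm_eq_abs, abs_of_pos hc]
      by_cases h : 1 ≤ ‖w‖
      · have hmem : (c • w) ∈ {z : EuclideanSpace ℝ (Fin d) | c ≤ ‖z‖} := by
          show c ≤ ‖c • w‖
          rw [hnorm]; nlinarith
        have : F (c • w) = ENNReal.ofReal ((c * ‖w‖) ^ (-ρ)) := by
          simp only [hFdef]
          rw [Set.indicator_of_mem hmem, hnorm]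
        rw [this, Real.mul_rpow hc.le (norm_nonneg w),
          ENNReal.ofReal_mul (Real.rpow_nonneg hc.le _)]
        simp [hgdef, Set.indicator_of_mem, h]
      · have hw : ‖w‖ < 1 := lt_of_not_ge h
        have hmem : (c • w) ∉ {z : EuclideanSpace ℝ (Fin d) | c ≤ ‖z‖} := by
          show ¬ c ≤ ‖c • w‖
          rw [hnorm]; push_neg; nlinarith
        have : F (c • w) = 0 := by
          simp only [hFdef]; rw [Set.indicator_of_notMem hmem]
        rw [this]
        have : g w = 0 := by simp [hgdef, Set.indicator_of_notMem, h]
        rw [this, mul_zero]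
    have hmap := Measure.map_addHaar_smul (volume : Measure (EuclideanSpace ℝ (Fin d))) hcne
    have h1 : (∫⁻ w : EuclideanSpace ℝ (Fin d), F (c • w)) = ENNReal.ofReal (|(c ^ d)⁻¹|) * ∫⁻ z : EuclideanSpace ℝ (Fin d), F z := by
      rw [← lintegral_map hFmeas (measurable_const_smul c), hmap, lintegral_smul_measure,
        finrank_euclideanSpace_fin, smul_eq_mul]
    have h2 : (∫⁻ w : EuclideanSpace ℝ (Fin d), F (c • w)) = ENNReal.ofReal (c ^ (-ρ)) * K := by
      rw [hKdef]
      calc (∫⁻ w : EuclideanSpace ℝ (Fin d), F (c • w)) = ∫⁻ w : EuclideanSpace ℝ (Fin d), ENNReal.ofReal (c ^ (-ρ)) * g w := by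
            exact lintegral_congr hcomp
      _ = ENNReal.ofReal (c ^ (-ρ)) * ∫⁻ w : EuclideanSpace ℝ (Fin d), g w :=
            lintegral_const_mul' _ _ ENNReal.ofReal_ne_top
    have h3 : (∫⁻ z : EuclideanSpace ℝ (Fin d) in {z : EuclideanSpace ℝ (Fin d) | c ≤ ‖z‖}, ENNReal.ofReal (‖z‖ ^ (-ρ)))
        = ∫⁻ z : EuclideanSpace ℝ (Fin d), F z := (lintegral_indicator (hmeas_set c) _).symm
    have hcd : (0:ℝ) < c ^ d := pow_pos hc d
    have h4 : ENNReal.ofReal (c ^ d) * ENNReal.ofReal (|(c ^ d)⁻¹|) = 1 := by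
      rw [abs_of_pos (inv_pos.mpr hcd), ← ENNReal.ofReal_mul hcd.le, mul_inv_cancel₀ (ne_of_gt hcd)]
      simp
    have h5 : ∫⁻ z : EuclideanSpace ℝ (Fin d), F z = ENNReal.ofReal (c ^ d) * (ENNReal.ofReal (c ^ (-ρ)) * K) := by
      rw [← h2, h1, ← mul_assoc, h4, one_mul]
    rw [h3, h5, ← mul_assoc, ← ENNReal.ofReal_mul hcd.le]
    congr 2
    rw [← Real.rpow_natCast c d, ← Real.rpow_add hc]
    congr 1
    simp [hρdef]
  -- the constant
  set N : ℕ := ⌈lam + 1⌉₊ with hNdef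
  have hN1 : (1:ℝ) ≤ (N:ℝ) := by
    have : (1:ℕ) ≤ N := Nat.one_le_ceil_iff.mpr (by linarith)
    exact_mod_cast this
  have hNlam : lam + 1 ≤ (N:ℝ) := Nat.le_ceil _
  have hKt : (0:ℝ) < K.toReal + 1 := by positivity
  refine ⟨(N:ℝ) * C₀ * CV * (K.toReal + 1), by positivity, ?_⟩
  intro V ν hV0 hVpos hVmono hVsub hVscale hνmeas hνnonneg hνbound r hr x hx1 hx2
  set i : Fin d := ⟨d - 1, by omega⟩ with hidef
  have hVr : 0 < V r := hVpos r hr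
  set A : ℝ := (N:ℝ) * C₀ * CV * r ^ δ / V r with hAdef
  have hA : 0 ≤ A := by
    apply div_nonneg _ hVr.le
    have := Real.rpow_nonneg hr.le δ
    positivity
  -- pointwise bound
  have hpt : ∀ y : EuclideanSpace ℝ (Fin d), y ∈ {y : EuclideanSpace ℝ (Fin d) | r ≤ ‖x - y‖} →
      ENNReal.ofReal (V (max (y i) 0) * ν ‖x - y‖)
        ≤ ENNReal.ofReal (A * ‖x - y‖ ^ (-ρ)) := by
    intro y hy
    have hy' : r ≤ ‖x - y‖ := hy
    set s : ℝ := ‖x - y‖ with hsdef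
    have hs : 0 < s := lt_of_lt_of_le hr hy'
    have hVs : 0 < V s := hVpos s hs
    apply ENNReal.ofReal_le_ofReal
    -- max (y i) 0 ≤ N * s
    have hcoord : |x i - y i| ≤ s := by
      have := aux_coord (x - y) i
      simpa [hsdef] using this
    have hmax : max (y i) 0 ≤ (N:ℝ) * s := by
      apply max_le
      · have : y i ≤ x i + s := by
          have h1 : y i - x i ≤ |x i - y i| := by
            rw [abs_sub_comm]; exact le_abs_self _
          linarith
        have h2 : x i + s ≤ lam * r + s := by linarith
        have h3 : lam * r + s ≤ (lam + 1) * s := by nlinarith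
        have h4 : (lam + 1) * s ≤ (N:ℝ) * s := by nlinarith
        linarith
      · positivity
    have hVmax : V (max (y i) 0) ≤ (N:ℝ) * V s := by
      calc V (max (y i) 0) ≤ V ((N:ℝ) * s) := hVmono _ _ hmax
      _ ≤ (N:ℝ) * V s := aux_Vmul V (hV0 0 le_rfl) hVsub N s
    have hν := hνbound s hs
    have hνn := hνnonneg s hs
    have hVmax0 : 0 ≤ V (max (y i) 0) := by
      rcases le_or_gt (max (y i) 0) 0 with h | h
      · rw [hV0 _ h]
      · exact (hVpos _ h).le
    -- scaling lower bound on V s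
    have hVslow : V r * (CV⁻¹ * (s / r) ^ δ) ≤ V s := by
      have := hVscale r s hr hy'
      rw [le_div_iff₀ hVr] at this
      linarith
    have hVslowpos : 0 < V r * (CV⁻¹ * (s / r) ^ δ) := by
      have h1 : (0:ℝ) < (s / r) ^ δ := Real.rpow_pos_of_pos (div_pos hs hr) δ
      have h2 : (0:ℝ) < CV⁻¹ := inv_pos.mpr (by linarith)
      positivity
    have hsd : (0:ℝ) < (s:ℝ) ^ d := pow_pos hs d
    calc V (max (y i) 0) * ν s ≤ ((N:ℝ) * V s) * (C₀ / (s ^ d * V s ^ 2)) := by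
          apply mul_le_mul hVmax hν hνn
          positivity
    _ = (N:ℝ) * C₀ / (s ^ d * V s) := by field_simp
    _ ≤ (N:ℝ) * C₀ / (s ^ d * (V r * (CV⁻¹ * (s / r) ^ δ))) := by
          apply div_le_div_of_nonneg_left (by positivity) (by positivity)
          apply mul_le_mul_of_nonneg_left hVslow hsd.le
    _ = A * s ^ (-ρ) := by
          rw [hAdef, hρdef]
          rw [Real.div_rpow hs.le hr.le, Real.rpow_neg hs.le ((d:ℝ) + δ),
            Real.rpow_add hs, Real.rpow_natCast]
          have h1 : (0:ℝ) < r ^ δ := Real.rpow_pos_of_pos hr δ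
          have h2 : (0:ℝ) < s ^ δ := Real.rpow_pos_of_pos hs δ
          field_simp
  -- assemble
  calc ∫⁻ y : EuclideanSpace ℝ (Fin d) in {y : EuclideanSpace ℝ (Fin d) | r ≤ ‖x - y‖},
          ENNReal.ofReal (V (max (y i) 0) * ν ‖x - y‖)
      ≤ ∫⁻ y : EuclideanSpace ℝ (Fin d) in {y : EuclideanSpace ℝ (Fin d) | r ≤ ‖x - y‖}, ENNReal.ofReal (A * ‖x - y‖ ^ (-ρ)) := by
        apply setLIntegral_mono' (by
          have : {y : EuclideanSpace ℝ (Fin d) | r ≤ ‖x - y‖} = (fun y : EuclideanSpace ℝ (Fin d) => x - y) ⁻¹' {z : EuclideanSpace ℝ (Fin d) | r ≤ ‖z‖} := rfl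
          rw [this]
          exact (hmeas_set r).preimage (measurable_const.sub measurable_id)) hpt
    _ = ∫⁻ y : EuclideanSpace ℝ (Fin d) in {y : EuclideanSpace ℝ (Fin d) | r ≤ ‖x - y‖},
          ENNReal.ofReal A * ENNReal.ofReal (‖x - y‖ ^ (-ρ)) := by
        apply lintegral_congr
        intro y
        rw [ENNReal.ofReal_mul hA]
    _ = ENNReal.ofReal A * ∫⁻ y : EuclideanSpace ℝ (Fin d) in {y : EuclideanSpace ℝ (Fin d) | r ≤ ‖x - y‖},
          ENNReal.ofReal (‖x - y‖ ^ (-ρ)) :=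
        lintegral_const_mul' _ _ ENNReal.ofReal_ne_top
    _ = ENNReal.ofReal A * (ENNReal.ofReal (r ^ (-δ)) * K) := by
        congr 1
        have hSmeas : MeasurableSet {y : EuclideanSpace ℝ (Fin d) | r ≤ ‖x - y‖} :=
          (hmeas_set r).preimage (measurable_const.sub measurable_id)
        set F : EuclideanSpace ℝ (Fin d) → ℝ≥0∞ :=
          fun z => ({z : EuclideanSpace ℝ (Fin d) | r ≤ ‖z‖}).indicator (fun z => ENNReal.ofReal (‖z‖ ^ (-ρ))) z
            with hFdef
        have hFmeas : Measurable F := hmeas_f.indicator (hmeas_set r)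
        have hind : ∀ y : EuclideanSpace ℝ (Fin d),
            ({y : EuclideanSpace ℝ (Fin d) | r ≤ ‖x - y‖}).indicator
              (fun y => ENNReal.ofReal (‖x - y‖ ^ (-ρ))) y = F (x - y) := by
          intro y
          by_cases h : r ≤ ‖x - y‖
          · simp only [hFdef]
            rw [Set.indicator_of_mem (show y ∈ {y : EuclideanSpace ℝ (Fin d) | r ≤ ‖x - y‖} from h),
              Set.indicator_of_mem (show (x - y) ∈ {z : EuclideanSpace ℝ (Fin d) | r ≤ ‖z‖} from h)]
          · simp only [hFdef]
            rw [Set.indicator_of_notMem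
                (show y ∉ {y : EuclideanSpace ℝ (Fin d) | r ≤ ‖x - y‖} from h),
              Set.indicator_of_notMem
                (show (x - y) ∉ {z : EuclideanSpace ℝ (Fin d) | r ≤ ‖z‖} from h)]
        calc (∫⁻ y : EuclideanSpace ℝ (Fin d) in {y : EuclideanSpace ℝ (Fin d) | r ≤ ‖x - y‖}, ENNReal.ofReal (‖x - y‖ ^ (-ρ)))
            = ∫⁻ y : EuclideanSpace ℝ (Fin d), ({y : EuclideanSpace ℝ (Fin d) | r ≤ ‖x - y‖}).indicator
                (fun y => ENNReal.ofReal (‖x - y‖ ^ (-ρ))) y :=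
              (lintegral_indicator hSmeas _).symm
        _ = ∫⁻ y : EuclideanSpace ℝ (Fin d), F (x - y) := lintegral_congr hind
        _ = ∫⁻ z : EuclideanSpace ℝ (Fin d), F z :=
              (Measure.measurePreserving_sub_left volume x).lintegral_comp hFmeas
        _ = ∫⁻ z : EuclideanSpace ℝ (Fin d) in {z : EuclideanSpace ℝ (Fin d) | r ≤ ‖z‖}, ENNReal.ofReal (‖z‖ ^ (-ρ)) :=
              lintegral_indicator (hmeas_set r) _
        _ = ENNReal.ofReal (r ^ (-δ)) * K := hscale r hr
    _ ≤ ENNReal.ofReal (((N:ℝ) * C₀ * CV * (K.toReal + 1)) / V r) := by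
        have hK' : K ≤ ENNReal.ofReal (K.toReal + 1) := by
          calc K = ENNReal.ofReal K.toReal := (ENNReal.ofReal_toReal hKfin.ne).symm
          _ ≤ ENNReal.ofReal (K.toReal + 1) :=
            ENNReal.ofReal_le_ofReal (by linarith [ENNReal.toReal_nonneg (a := K)])
        calc ENNReal.ofReal A * (ENNReal.ofReal (r ^ (-δ)) * K)
            ≤ ENNReal.ofReal A * (ENNReal.ofReal (r ^ (-δ)) * ENNReal.ofReal (K.toReal + 1)) := by
              gcongr
        _ = ENNReal.ofReal (A * (r ^ (-δ) * (K.toReal + 1))) := by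
              rw [ENNReal.ofReal_mul hA, ENNReal.ofReal_mul (Real.rpow_nonneg hr.le _)]
        _ = ENNReal.ofReal (((N:ℝ) * C₀ * CV * (K.toReal + 1)) / V r) := by
              congr 1
              rw [hAdef]
              have h1 : r ^ δ * r ^ (-δ) = 1 := by
                rw [← Real.rpow_add hr]; simp
              field_simp
              linear_combination h1
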